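/- arXiv:2105.15167 — 3 statements merged into one kernel-verified Lean document; each statement's English description precedes it below -/
import Mathlib

section
/- Let C be a braided monoidal category linear over a field k of characteristic zero, with End(I) ≅ k, and suppose every object is dualizable. Let e be an invertible transparent object (β_{e,x} ∘ β_{x,e} = id for all x) with β_{e,e} = −id_{e⊗e}. Then for every object b with η(b) ≠ 0 (in particular, every simple object of a braided fusion category), b is not isomorphic to e ⊗ (*b), where *b is a left dual of b. Equivalently: the equality η(e ⊗ *b) = −η(*b) = −η(b) together with η(b) = η(*b) and η(b) ≠ 0 shows b ≇ e ⊗ *b. -/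
set_option linter.unusedSectionVars false
set_option maxHeartbeats 1600000

open CategoryTheory MonoidalCategory

variable {C : Type*} [Category C] [MonoidalCategory C] [BraidedCategory C]

/-- Right duality data for `x` with dual object `d`. -/
structure DualityData (x d : C) where
  ev : x ⊗ d ⟶ 𝟙_ C
  coev : 𝟙_ C ⟶ d ⊗ x
  zigzag₁ : (ρ_ x).inv ≫ (x ◁ coev) ≫ (α_ x d x).inv ≫ (ev ▷ x) ≫ (λ_ x).hom = 𝟙 x
  zigzag₂ : (λ_ d).inv ≫ (coev ▷ d) ≫ (α_ d x d).hom ≫ (d ◁ ev) ≫ (ρ_ d).hom = 𝟙 d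

/-- The η-dimension associated to right duality data. -/
def etaDim {x d : C} (D : DualityData x d) : (𝟙_ C : C) ⟶ 𝟙_ C :=
  D.coev ≫ (β_ d x).hom ≫ D.ev

namespace StatementFiveAux

open BraidedCategory Category

/-- a scalar (endomorphism of the unit) passes across a strand -/
lemma scalar_pass (s : 𝟙_ C ⟶ 𝟙_ C) (X : C) :
    s ▷ X ≫ (λ_ X).hom = (λ_ X).hom ≫ (ρ_ X).inv ≫ X ◁ s ≫ (ρ_ X).hom := by
  have h := braiding_naturality_left s X
  rw [braiding_tensorUnit_left] at h
  rw [← cancel_mono (ρ_ X).inv]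
  simpa using h

end StatementFiveAux

namespace DualityData

open BraidedCategory Category StatementFiveAux

variable {x y d d₁ d₂ : C}

lemma zig₁ (D : DualityData x d) :
    x ◁ D.coev ≫ (α_ x d x).inv ≫ D.ev ▷ x = (ρ_ x).hom ≫ (λ_ x).inv := by
  rw [← cancel_epi (ρ_ x).inv, ← cancel_mono (λ_ x).hom]
  simpa using D.zigzag₁

lemma zig₂ (D : DualityData x d) :
    D.coev ▷ d ≫ (α_ d x d).hom ≫ d ◁ D.ev = (λ_ d).hom ≫ (ρ_ d).inv := by
  rw [← cancel_epi (λ_ d).inv, ← cancel_mono (ρ_ d).hom]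
  simpa using D.zigzag₂

/-- duality data as an `ExactPairing`. -/
def toPairing (D : DualityData x d) : ExactPairing d x where
  coevaluation' := D.coev
  evaluation' := D.ev
  coevaluation_evaluation' := by
    rw [← cancel_epi (ρ_ x).inv, ← cancel_mono (λ_ x).hom]
    simpa using D.zigzag₁
  evaluation_coevaluation' := by
    rw [← cancel_epi (λ_ d).inv, ← cancel_mono (ρ_ d).hom]
    simpa using D.zigzag₂

/-- an `ExactPairing` as duality data. -/
def ofPairing (P : ExactPairing d x) : DualityData x d where
  ev := P.evaluation'
  coev := P.coevaluation'
  zigzag₁ := by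
    rw [← cancel_epi (ρ_ x).hom, ← cancel_mono (λ_ x).inv]
    simpa using P.coevaluation_evaluation'
  zigzag₂ := by
    rw [← cancel_epi (λ_ d).hom, ← cancel_mono (ρ_ d).inv]
    simpa using P.evaluation_coevaluation'

/-- braided flip: from duality data for `x` we get duality data for the dual `d`. -/
def flip (L : DualityData x d) : DualityData d x :=
  ofPairing (letI := L.toPairing; exactPairing_swap d x)

@[simp] lemma flip_ev (L : DualityData x d) :
    L.flip.ev = (β_ d x).hom ≫ L.ev := rfl

@[simp] lemma flip_coev (L : DualityData x d) :
    L.flip.coev = L.coev ≫ (β_ x d).inv := rfl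

lemma etaDim_flip (L : DualityData x d) : etaDim L.flip = etaDim L := by
  simp [etaDim]

/-- the comparison morphism between two right duals. -/
def compare (D₁ : DualityData x d₁) (D₂ : DualityData x d₂) : d₁ ⟶ d₂ :=
  (λ_ d₁).inv ≫ (D₂.coev ▷ d₁) ≫ (α_ d₂ x d₁).hom ≫ (d₂ ◁ D₁.ev) ≫ (ρ_ d₂).hom

lemma coev_compare (D₁ : DualityData x d₁) (D₂ : DualityData x d₂) :
    D₁.coev ≫ (D₁.compare D₂ ▷ x) = D₂.coev := by
  dsimp only [compare]
  calc D₁.coev ≫ ((λ_ d₁).inv ≫ (D₂.coev ▷ d₁) ≫ (α_ d₂ x d₁).hom ≫ (d₂ ◁ D₁.ev) ≫ (ρ_ d₂).hom) ▷ x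
      = 𝟙 _ ⊗≫ (𝟙_ C ◁ D₁.coev ≫ D₂.coev ▷ (d₁ ⊗ x)) ⊗≫
        d₂ ◁ ((α_ x d₁ x).inv ≫ D₁.ev ▷ x) ⊗≫ 𝟙 _ := by monoidal
    _ = 𝟙 _ ⊗≫ (D₂.coev ▷ (𝟙_ C) ≫ (d₂ ⊗ x) ◁ D₁.coev) ⊗≫
        d₂ ◁ ((α_ x d₁ x).inv ≫ D₁.ev ▷ x) ⊗≫ 𝟙 _ := by rw [whisker_exchange]
    _ = 𝟙 _ ⊗≫ D₂.coev ⊗≫ d₂ ◁ (x ◁ D₁.coev ≫ (α_ x d₁ x).inv ≫ D₁.ev ▷ x) ⊗≫ 𝟙 _ := by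
        monoidal
    _ = 𝟙 _ ⊗≫ D₂.coev ⊗≫ d₂ ◁ ((ρ_ x).hom ≫ (λ_ x).inv) ⊗≫ 𝟙 _ := by rw [D₁.zig₁]
    _ = D₂.coev := by monoidal

lemma compare_ev (D₁ : DualityData x d₁) (D₂ : DualityData x d₂) :
    (x ◁ D₁.compare D₂) ≫ D₂.ev = D₁.ev := by
  dsimp only [compare]
  calc x ◁ ((λ_ d₁).inv ≫ (D₂.coev ▷ d₁) ≫ (α_ d₂ x d₁).hom ≫ (d₂ ◁ D₁.ev) ≫ (ρ_ d₂).hom) ≫ D₂.ev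
      = 𝟙 _ ⊗≫ x ◁ (D₂.coev ▷ d₁) ⊗≫ ((x ⊗ d₂) ◁ D₁.ev ≫ D₂.ev ▷ (𝟙_ C)) ⊗≫ 𝟙 _ := by monoidal
    _ = 𝟙 _ ⊗≫ x ◁ (D₂.coev ▷ d₁) ⊗≫ (D₂.ev ▷ (x ⊗ d₁) ≫ 𝟙_ C ◁ D₁.ev) ⊗≫ 𝟙 _ := by
        rw [← whisker_exchange]
    _ = 𝟙 _ ⊗≫ (x ◁ D₂.coev ≫ (α_ x d₂ x).inv ≫ D₂.ev ▷ x) ▷ d₁ ⊗≫ D₁.ev ⊗≫ 𝟙 _ := by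
        monoidal
    _ = 𝟙 _ ⊗≫ ((ρ_ x).hom ≫ (λ_ x).inv) ▷ d₁ ⊗≫ D₁.ev ⊗≫ 𝟙 _ := by rw [D₂.zig₁]
    _ = D₁.ev := by monoidal

/-- the η-dimension does not depend on the choice of duality data. -/
theorem etaDim_unique (D₁ : DualityData x d₁) (D₂ : DualityData x d₂) :
    etaDim D₁ = etaDim D₂ := by
  have h1 := D₁.coev_compare D₂
  have h2 := D₁.compare_ev D₂
  calc etaDim D₁ = D₁.coev ≫ (β_ d₁ x).hom ≫ D₁.ev := rfl
    _ = D₁.coev ≫ (β_ d₁ x).hom ≫ (x ◁ D₁.compare D₂) ≫ D₂.ev := by rw [h2]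
    _ = D₁.coev ≫ (D₁.compare D₂ ▷ x) ≫ (β_ d₂ x).hom ≫ D₂.ev := by
        rw [← braiding_naturality_left_assoc]
    _ = D₂.coev ≫ (β_ d₂ x).hom ≫ D₂.ev := by rw [reassoc_of% h1]
    _ = etaDim D₂ := rfl

/-- transport duality data along an isomorphism. -/
def ofIso (φ : x ≅ y) (D : DualityData x d) : DualityData y d where
  ev := (φ.inv ▷ d) ≫ D.ev
  coev := D.coev ≫ (d ◁ φ.hom)
  zigzag₁ := by
    calc (ρ_ y).inv ≫ y ◁ (D.coev ≫ d ◁ φ.hom) ≫ (α_ y d y).inv ≫ ((φ.inv ▷ d ≫ D.ev) ▷ y) ≫ (λ_ y).hom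
        = 𝟙 _ ⊗≫ y ◁ D.coev ⊗≫ ((y ⊗ d) ◁ φ.hom ≫ (φ.inv ▷ d) ▷ y) ⊗≫ D.ev ▷ y ⊗≫ 𝟙 _ := by
          monoidal
      _ = 𝟙 _ ⊗≫ y ◁ D.coev ⊗≫ ((φ.inv ▷ d) ▷ x ≫ (x ⊗ d) ◁ φ.hom) ⊗≫ D.ev ▷ y ⊗≫ 𝟙 _ := by
          rw [whisker_exchange]
      _ = 𝟙 _ ⊗≫ (y ◁ D.coev ≫ φ.inv ▷ (d ⊗ x)) ⊗≫ ((x ⊗ d) ◁ φ.hom ≫ D.ev ▷ y) ⊗≫ 𝟙 _ := by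
          monoidal
      _ = 𝟙 _ ⊗≫ (φ.inv ▷ 𝟙_ C ≫ x ◁ D.coev) ⊗≫ (D.ev ▷ x ≫ 𝟙_ C ◁ φ.hom) ⊗≫ 𝟙 _ := by
          rw [← whisker_exchange, ← whisker_exchange]
      _ = φ.inv ≫ ((ρ_ x).inv ≫ x ◁ D.coev ≫ (α_ x d x).inv ≫ D.ev ▷ x ≫ (λ_ x).hom) ≫ φ.hom := by
          monoidal
      _ = φ.inv ≫ 𝟙 x ≫ φ.hom := by rw [← D.zigzag₁]
      _ = 𝟙 y := by simp
  zigzag₂ := by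
    calc (λ_ d).inv ≫ ((D.coev ≫ d ◁ φ.hom) ▷ d) ≫ (α_ d y d).hom ≫ (d ◁ (φ.inv ▷ d ≫ D.ev)) ≫ (ρ_ d).hom
        = 𝟙 _ ⊗≫ D.coev ▷ d ⊗≫ d ◁ ((φ.hom ≫ φ.inv) ▷ d) ⊗≫ d ◁ D.ev ⊗≫ 𝟙 _ := by monoidal
      _ = 𝟙 _ ⊗≫ D.coev ▷ d ⊗≫ d ◁ (𝟙 x ▷ d) ⊗≫ d ◁ D.ev ⊗≫ 𝟙 _ := by rw [Iso.hom_inv_id]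
      _ = (λ_ d).inv ≫ (D.coev ▷ d) ≫ (α_ d x d).hom ≫ (d ◁ D.ev) ≫ (ρ_ d).hom := by monoidal
      _ = 𝟙 d := D.zigzag₂

lemma etaDim_ofIso (φ : x ≅ y) (D : DualityData x d) : etaDim (D.ofIso φ) = etaDim D := by
  dsimp [etaDim, ofIso]
  simp only [Category.assoc]
  rw [braiding_naturality_right_assoc]
  simp

variable {e e' ℓ b : C}

/-- tensor duality: dual of `e ⊗ ℓ` is `b ⊗ e'`. -/
def tensorDD (E : DualityData e e') (L : DualityData ℓ b) : DualityData (e ⊗ ℓ) (b ⊗ e') where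
  ev := (α_ e ℓ (b ⊗ e')).hom ≫
    (e ◁ ((α_ ℓ b e').inv ≫ (L.ev ▷ e') ≫ (λ_ e').hom)) ≫ E.ev
  coev := L.coev ≫
    (b ◁ ((λ_ ℓ).inv ≫ (E.coev ▷ ℓ) ≫ (α_ e' e ℓ).hom)) ≫ (α_ b e' (e ⊗ ℓ)).inv
  zigzag₁ := by
    trans (𝟙 (e ⊗ ℓ) ⊗≫ ((e ⊗ ℓ : C) ◁ L.coev) ⊗≫
      (((e ⊗ (ℓ ⊗ b) : C)) ◁ ((λ_ ℓ).inv ≫ E.coev ▷ ℓ) ≫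
        ((e ◁ L.ev ≫ (ρ_ e).hom) ▷ ((e' ⊗ e) ⊗ ℓ : C))) ⊗≫
      (E.ev ▷ (e ⊗ ℓ : C)) ⊗≫ 𝟙 (e ⊗ ℓ))
    · monoidal
    rw [whisker_exchange]
    trans (𝟙 (e ⊗ ℓ) ⊗≫ (e ◁ (ℓ ◁ L.coev ≫ (α_ ℓ b ℓ).inv ≫ L.ev ▷ ℓ)) ⊗≫
      ((e ◁ E.coev ≫ (α_ e e' e).inv ≫ E.ev ▷ e) ▷ ℓ) ⊗≫ 𝟙 (e ⊗ ℓ))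
    · monoidal
    rw [L.zig₁, E.zig₁]
    monoidal
  zigzag₂ := by
    trans (𝟙 (b ⊗ e') ⊗≫ (L.coev ▷ (b ⊗ e' : C)) ⊗≫
      ((((ρ_ b).inv ≫ b ◁ E.coev) ▷ (ℓ ⊗ (b ⊗ e') : C)) ≫
        ((b ⊗ (e' ⊗ e) : C) ◁ ((α_ ℓ b e').inv ≫ L.ev ▷ e' ≫ (λ_ e').hom))) ⊗≫
      (b ◁ ((α_ e' e e').hom ≫ e' ◁ E.ev)) ⊗≫ 𝟙 (b ⊗ e'))
    · monoidal
    rw [← whisker_exchange]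
    trans (𝟙 (b ⊗ e') ⊗≫ ((L.coev ▷ b ≫ (α_ b ℓ b).hom ≫ b ◁ L.ev) ▷ e') ⊗≫
      (b ◁ (E.coev ▷ e' ≫ (α_ e' e e').hom ≫ e' ◁ E.ev)) ⊗≫ 𝟙 (b ⊗ e'))
    · monoidal
    rw [L.zig₂, E.zig₂]
    monoidal

/-- the η-dimension is multiplicative for the tensor duality when `e` is transparent. -/
lemma etaDim_tensorDD (E : DualityData e e') (L : DualityData ℓ b)
    (htr : ∀ x : C, (β_ x e).hom ≫ (β_ e x).hom = 𝟙 (x ⊗ e)) :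
    etaDim (E.tensorDD L) = etaDim L ≫ etaDim E := by
  have hfb : (β_ b e).hom = (β_ e b).inv := by
    rw [← cancel_mono (β_ e b).hom, Iso.inv_hom_id, htr b]
  dsimp only [etaDim, tensorDD]
  simp only [braiding_tensor_left_hom, braiding_tensor_right_hom]
  trans (𝟙 (𝟙_ C) ⊗≫ L.coev ⊗≫ b ◁ ((λ_ ℓ).inv ≫ E.coev ▷ ℓ) ⊗≫
      b ◁ ((β_ e' e).hom ▷ ℓ) ⊗≫
      ((β_ b e).hom ▷ (e' ⊗ ℓ) ≫ (e ⊗ b) ◁ (β_ e' ℓ).hom) ⊗≫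
      e ◁ ((β_ b ℓ).hom ▷ e') ⊗≫ e ◁ (L.ev ▷ e') ⊗≫ E.ev ⊗≫ 𝟙 (𝟙_ C))
  · monoidal
  rw [← whisker_exchange]
  rw [hfb]
  trans (𝟙 (𝟙_ C) ⊗≫ L.coev ⊗≫ b ◁ ((λ_ ℓ).inv ≫ E.coev ▷ ℓ) ⊗≫
      b ◁ ((β_ e' e).hom ▷ ℓ) ⊗≫
      b ◁ (e ◁ (β_ e' ℓ).hom) ⊗≫
      b ◁ (((β_ e ℓ).hom ≫ (β_ e ℓ).inv) ▷ e') ⊗≫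
      ((β_ e b).inv ▷ (ℓ ⊗ e')) ⊗≫
      e ◁ (((β_ b ℓ).hom ≫ L.ev) ▷ e') ⊗≫ E.ev ⊗≫ 𝟙 (𝟙_ C))
  · rw [Iso.hom_inv_id]; monoidal
  trans (𝟙 (𝟙_ C) ⊗≫ L.coev ⊗≫ b ◁ ((λ_ ℓ).inv ≫ E.coev ▷ ℓ) ⊗≫
      b ◁ ((β_ e' e).hom ▷ ℓ) ⊗≫
      b ◁ (e ◁ (β_ e' ℓ).hom) ⊗≫
      b ◁ ((β_ e ℓ).hom ▷ e') ⊗≫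
      (((β_ e (b ⊗ ℓ)).inv ≫ e ◁ ((β_ b ℓ).hom ≫ L.ev)) ▷ e') ⊗≫ E.ev ⊗≫ 𝟙 (𝟙_ C))
  · rw [braiding_tensor_right_inv]; monoidal
  rw [← braiding_inv_naturality_left]
  rw [braiding_inv_tensorUnit_right]
  trans (𝟙 (𝟙_ C) ⊗≫ L.coev ⊗≫ b ◁ ((λ_ ℓ).inv ≫ E.coev ▷ ℓ) ⊗≫
      b ◁ ((β_ e' e).hom ▷ ℓ) ⊗≫
      b ◁ (e ◁ (β_ e' ℓ).hom) ⊗≫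
      b ◁ ((β_ e ℓ).hom ▷ e') ⊗≫
      (((β_ b ℓ).hom ≫ L.ev) ▷ (e ⊗ e') ≫ (𝟙_ C) ◁ E.ev) ⊗≫ 𝟙 (𝟙_ C))
  · monoidal
  rw [← whisker_exchange]
  trans (𝟙 (𝟙_ C) ⊗≫ L.coev ⊗≫ b ◁ ((λ_ ℓ).inv ≫ E.coev ▷ ℓ) ⊗≫
      b ◁ ((β_ e' e).hom ▷ ℓ) ⊗≫
      b ◁ ((β_ (e ⊗ e') ℓ).hom ≫ ℓ ◁ E.ev) ⊗≫
      (((β_ b ℓ).hom ≫ L.ev) ▷ (𝟙_ C)) ⊗≫ 𝟙 (𝟙_ C))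
  · rw [braiding_tensor_left_hom]; monoidal
  rw [← braiding_naturality_left, braiding_tensorUnit_left]
  trans (𝟙 (𝟙_ C) ⊗≫ L.coev ⊗≫
      b ◁ ((λ_ ℓ).inv ≫ ((E.coev ≫ (β_ e' e).hom ≫ E.ev) ▷ ℓ) ≫ (λ_ ℓ).hom) ⊗≫
      (((β_ b ℓ).hom ≫ L.ev) ▷ (𝟙_ C)) ⊗≫ 𝟙 (𝟙_ C))
  · monoidal
  rw [scalar_pass]
  trans (𝟙 (𝟙_ C) ⊗≫ L.coev ⊗≫
      ((b ⊗ ℓ) ◁ (E.coev ≫ (β_ e' e).hom ≫ E.ev) ≫ ((β_ b ℓ).hom ≫ L.ev) ▷ (𝟙_ C)) ⊗≫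
      𝟙 (𝟙_ C))
  · monoidal
  rw [whisker_exchange]
  monoidal

lemma unwhiskerR (E : DualityData e e') [IsIso E.ev] {X Y : C} {f g : X ⟶ Y}
    (h : f ▷ e = g ▷ e) : f = g := by
  have h2 : f ▷ (e ⊗ e') = g ▷ (e ⊗ e') := by
    have hf := associator_naturality_left f e e'
    have hg := associator_naturality_left g e e'
    rw [h] at hf
    exact (cancel_epi (α_ X e e').hom).1 (hf.symm.trans hg)
  have hf := whisker_exchange (f := f) (g := E.ev)
  have hg := whisker_exchange (f := g) (g := E.ev)
  rw [← h2] at hg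
  have h3 : f ▷ 𝟙_ C = g ▷ 𝟙_ C := (cancel_epi (X ◁ E.ev)).1 (hf.trans hg.symm)
  have h4 := rightUnitor_naturality f
  have h5 := rightUnitor_naturality g
  rw [h3] at h4
  exact (cancel_epi (ρ_ X).hom).1 (h4.symm.trans h5)

lemma unwhiskerL (E : DualityData e e') [IsIso E.ev] {X Y : C} {f g : X ⟶ Y}
    (h : e' ◁ f = e' ◁ g) : f = g := by
  have h2 : (e ⊗ e') ◁ f = (e ⊗ e') ◁ g := by
    have hf := associator_naturality_right e e' f
    have hg := associator_naturality_right e e' g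
    rw [h] at hf
    exact (cancel_mono (α_ e e' Y).hom).1 (hf.trans hg.symm)
  have hf := whisker_exchange (f := E.ev) (g := f)
  have hg := whisker_exchange (f := E.ev) (g := g)
  rw [← h2] at hg
  have h3 : (𝟙_ C) ◁ f = (𝟙_ C) ◁ g := (cancel_epi (E.ev ▷ X)).1 (hf.symm.trans hg)
  have h4 := leftUnitor_naturality f
  have h5 := leftUnitor_naturality g
  rw [h3] at h4
  exact (cancel_epi (λ_ X).hom).1 (h4.symm.trans h5)

lemma beta_ee_eq_id (E : DualityData e e') [IsIso E.ev] [IsIso E.coev]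
    (hq : E.coev ≫ (β_ e' e).hom ≫ E.ev = 𝟙 (𝟙_ C)) :
    (β_ e e).hom = 𝟙 (e ⊗ e) := by
  have hβ' : (β_ e' e).hom = inv E.coev ≫ inv E.ev := by
    rw [← cancel_epi E.coev, ← cancel_mono E.ev]
    simpa using hq
  have hz : ((inv E.ev : 𝟙_ C ⟶ e ⊗ e') ▷ e) =
      (λ_ e).hom ≫ (ρ_ e).inv ≫ (e ◁ E.coev) ≫ (α_ e e' e).inv := by
    rw [← cancel_mono (E.ev ▷ e)]
    simp only [Category.assoc]
    rw [E.zig₁]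
    simp [← comp_whiskerRight]
  have h := braiding_naturality_left E.coev e
  rw [braiding_tensor_left_hom, braiding_tensorUnit_left, hβ', comp_whiskerRight] at h
  rw [hz] at h
  have h2 : e' ◁ (β_ e e).hom = 𝟙 (e' ⊗ (e ⊗ e)) := by
    have := h
    rw [← cancel_epi (α_ e' e e).hom, ← cancel_epi (E.coev ▷ e),
        ← cancel_mono (α_ e' e e).inv, ← cancel_mono ((inv E.coev : e' ⊗ e ⟶ 𝟙_ C) ▷ e),
        ← cancel_mono (λ_ e).hom, ← cancel_mono (ρ_ e).inv, ← cancel_mono (e ◁ E.coev)]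
    simp only [Category.assoc, Iso.inv_hom_id, Iso.inv_hom_id_assoc, Category.comp_id] at this ⊢
    rw [this]
    simp [← comp_whiskerRight]
  have h3 : e' ◁ (β_ e e).hom = e' ◁ (𝟙 (e ⊗ e)) := by simpa using h2
  exact E.unwhiskerL h3

end DualityData

open DualityData StatementFiveAux in
/-- Let `C` be a `k`-linear braided monoidal category over a field of
characteristic zero with `End(𝟙) ≅ k` and all objects dualizable.  If `e` is an invertible
transparent object with `β_{e,e} = -id`, then any object `b` with `η(b) ≠ 0` is not
isomorphic to `e ⊗ *b`, where `*b` is any left dual of `b`. -/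
theorem not_iso_e_tensor_leftDual
    {k : Type*} [Field k] [CharZero k]
    [Preadditive C] [CategoryTheory.Linear k C]
    (hk : Function.Bijective fun a : k => a • (𝟙 (𝟙_ C)))
    (hdual : ∀ x : C, ∃ d : C, Nonempty (DualityData x d))
    {e e' : C} (E : DualityData e e') (hEev : IsIso E.ev) (hEcoev : IsIso E.coev)
    (htransp : ∀ x : C, (β_ x e).hom ≫ (β_ e x).hom = 𝟙 (x ⊗ e))
    (hee : (β_ e e).hom = -(𝟙 (e ⊗ e)))
    {b d ℓ : C} (D : DualityData b d) (L : DualityData ℓ b)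
    (hb : etaDim D ≠ 0) :
    ¬ Nonempty (b ≅ e ⊗ ℓ) := by
  haveI := hEev
  haveI := hEcoev
  rintro ⟨φ⟩
  -- step 1: η(b) = η(e ⊗ ℓ) = η(ℓ)·η(e), and η(b) = η(ℓ)
  have key : etaDim D = etaDim D ≫ etaDim E := by
    calc etaDim D = etaDim ((E.tensorDD L).ofIso φ.symm) := etaDim_unique _ _
      _ = etaDim (E.tensorDD L) := etaDim_ofIso _ _
      _ = etaDim L ≫ etaDim E := etaDim_tensorDD E L htransp
      _ = etaDim L.flip ≫ etaDim E := by rw [etaDim_flip]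
      _ = etaDim D ≫ etaDim E := by rw [etaDim_unique L.flip D]
  -- step 2: scalars, conclude η(e) = 𝟙
  obtain ⟨sa, hsa'⟩ := hk.2 (etaDim D)
  obtain ⟨sq, hsq'⟩ := hk.2 (etaDim E)
  have hsa : sa • (𝟙 (𝟙_ C)) = etaDim D := hsa'
  have hsq : sq • (𝟙 (𝟙_ C)) = etaDim E := hsq'
  have hsa0 : sa ≠ 0 := by
    rintro rfl
    exact hb (by rw [← hsa, zero_smul])
  have hcomp : (sa * sq) • (𝟙 (𝟙_ C)) = sa • (𝟙 (𝟙_ C)) := by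
    conv_rhs => rw [hsa, key, ← hsa, ← hsq]
    simp [Linear.smul_comp, Linear.comp_smul, smul_smul, mul_comm]
  have hsq1 : sq = 1 := by
    have := hk.1 (show (fun a : k => a • (𝟙 (𝟙_ C))) (sa * sq) = (fun a : k => a • (𝟙 (𝟙_ C))) sa from hcomp)
    have h2 : sa * sq = sa * 1 := by simpa using this
    exact mul_left_cancel₀ hsa0 h2
  have hqid : E.coev ≫ (β_ e' e).hom ≫ E.ev = 𝟙 (𝟙_ C) := by
    have : etaDim E = 𝟙 (𝟙_ C) := by rw [← hsq, hsq1, one_smul]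
    simpa [etaDim] using this
  -- step 3: hence β_{e,e} = 𝟙, contradicting β_{e,e} = -𝟙 in char 0
  have hbee : (β_ e e).hom = 𝟙 (e ⊗ e) := E.beta_ee_eq_id hqid
  have hneg : (𝟙 (e ⊗ e) : e ⊗ e ⟶ e ⊗ e) = -(𝟙 (e ⊗ e)) := by
    have h' := hee
    rw [hbee] at h'
    exact h'
  have h20 : (𝟙 (e ⊗ e) : e ⊗ e ⟶ e ⊗ e) = 0 := by
    have hsum : (𝟙 (e ⊗ e) : e ⊗ e ⟶ e ⊗ e) + 𝟙 (e ⊗ e) = 0 := by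
      nth_rewrite 2 [hneg]
      simp
    have h2s : (2 : k) • (𝟙 (e ⊗ e) : e ⊗ e ⟶ e ⊗ e) = 0 := by
      rw [two_smul]; exact hsum
    calc (𝟙 (e ⊗ e) : e ⊗ e ⟶ e ⊗ e) = ((2 : k)⁻¹ * 2) • (𝟙 (e ⊗ e)) := by
          norm_num
      _ = (2 : k)⁻¹ • ((2 : k) • (𝟙 (e ⊗ e))) := by rw [mul_smul]
      _ = 0 := by rw [h2s, smul_zero]
  -- step 4: propagate the collapse down to End(𝟙)
  have he0 : (𝟙 e : e ⟶ e) = 0 := by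
    apply E.unwhiskerR (f := 𝟙 e) (g := 0)
    have hz : ((0 : e ⟶ e) ▷ e) = 0 := by
      have h' : ((0 : e ⟶ e) ▷ e) = ((0 : e ⟶ e) ▷ e) ≫ 𝟙 (e ⊗ e) := by simp
      rw [h20] at h'
      simpa using h'
    rw [hz, id_whiskerRight, h20]
  have h1e : (𝟙 (𝟙_ C ⊗ e) : 𝟙_ C ⊗ e ⟶ 𝟙_ C ⊗ e) = 0 := by
    have : (𝟙 (𝟙_ C ⊗ e) : 𝟙_ C ⊗ e ⟶ 𝟙_ C ⊗ e) = (λ_ e).hom ≫ 𝟙 e ≫ (λ_ e).inv := by simp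
    rw [this, he0]
    simp
  have hu0 : (𝟙 (𝟙_ C) : 𝟙_ C ⟶ 𝟙_ C) = 0 := by
    apply E.unwhiskerR (f := 𝟙 (𝟙_ C)) (g := 0)
    have hz : ((0 : 𝟙_ C ⟶ 𝟙_ C) ▷ e) = 0 := by
      have h' : ((0 : 𝟙_ C ⟶ 𝟙_ C) ▷ e) = ((0 : 𝟙_ C ⟶ 𝟙_ C) ▷ e) ≫ 𝟙 (𝟙_ C ⊗ e) := by simp
      rw [h1e] at h'
      simpa using h'
    rw [hz, id_whiskerRight, h1e]
  exact hb (by rw [show etaDim D = etaDim D ≫ 𝟙 (𝟙_ C) by simp, hu0]; simp)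
end

section
/- Let F : B → C be a braided monoidal functor between braided monoidal categories. Then C becomes a braided right B-module category: the action c * b := c ⊗ F(b) together with the module braiding σ_{c,b} := β^C_{F(b),c} ∘ β^C_{c,F(b)} : c ⊗ F(b) → c ⊗ F(b) satisfies the two coherence conditions of a braided module category, namely σ_{m*x,y} ∘ (m * β^B_{x,y}) = (m * β^B⁻¹_{y,x}) ∘ (σ_{m,y} whiskered by x) (under the associator identifications m*(x⊗y) ≅ (m*x)*y etc.), and σ_{m*y,x} ∘ (σ_{m,y} * x) ∘ (m * β^B⁻¹_{y,x}) = (m * β^B_{x,y}) ∘ σ_{m,x⊗y}, and moreover σ_{m,I} is trivialized by the unitors. -/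
open CategoryTheory MonoidalCategory BraidedCategory

/-- The module braiding on `C` as a right `B`-module category via a braided functor
`F : B ⥤ C`: `σ_{m,b} = β_{F b, m} ∘ β_{m, F b}`. -/
def moduleBraiding {B C : Type*} [Category B] [MonoidalCategory B]
    [Category C] [MonoidalCategory C] [BraidedCategory C]
    (F : B ⥤ C) (m : C) (b : B) : m ⊗ F.obj b ⟶ m ⊗ F.obj b :=
  (β_ m (F.obj b)).hom ≫ (β_ (F.obj b) m).hom


section Aux

variable {C : Type*} [Category C] [MonoidalCategory C] [BraidedCategory C]

private theorem aux_unit (m U : C) (e : 𝟙_ C ≅ U) :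
    (β_ m U).hom ≫ (β_ U m).hom = 𝟙 _ := by
  rw [← cancel_epi (m ◁ e.hom)]
  rw [braiding_naturality_right_assoc, braiding_naturality_left,
    braiding_tensorUnit_right, braiding_tensorUnit_left]
  simp

private theorem aux_pure2 (m X Y : C) :
    (α_ m X Y).hom ≫ (m ◁ (β_ X Y).hom) ≫ (α_ m Y X).inv ≫
      (((β_ m Y).hom ≫ (β_ Y m).hom) ▷ X) =
    ((β_ (m ⊗ X) Y).hom ≫ (β_ Y (m ⊗ X)).hom) ≫ (α_ m X Y).hom ≫
      (m ◁ (β_ Y X).inv) ≫ (α_ m Y X).inv := by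
  simp [braiding_tensor_left_hom, braiding_tensor_right_hom]

private theorem aux_sigma_tensor (m X Y : C) :
    (β_ (m ⊗ Y) X).hom ≫ (β_ X (m ⊗ Y)).hom =
    (α_ m Y X).hom ≫ (m ◁ (β_ Y X).hom) ≫ (α_ m X Y).inv ≫
      (((β_ m X).hom ≫ (β_ X m).hom) ▷ Y) ≫ (α_ m X Y).hom ≫
      (m ◁ (β_ X Y).hom) ≫ (α_ m Y X).inv := by
  have h := aux_pure2 m Y X
  rw [← Category.assoc, ← Category.assoc, ← Category.assoc] at h ⊢
  rw [h]
  simp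

private theorem aux_pureDouble (m X Y : C) :
    (m ◁ (β_ Y X).inv) ≫ (α_ m Y X).inv ≫
      (((β_ m Y).hom ≫ (β_ Y m).hom) ▷ X) ≫ (α_ m Y X).hom ≫
      (m ◁ (β_ Y X).hom) ≫ (α_ m X Y).inv ≫
      (((β_ m X).hom ≫ (β_ X m).hom) ▷ Y) ≫ (α_ m X Y).hom =
    (β_ m (X ⊗ Y)).hom ≫ (β_ (X ⊗ Y) m).hom := by
  simp only [braiding_tensor_left_hom, braiding_tensor_right_hom, comp_whiskerRight, Category.assoc]
  rw [← cancel_epi (m ◁ (β_ Y X).hom), ← cancel_mono (α_ m X Y).inv]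
  simp only [Category.assoc, Iso.hom_inv_id, Category.comp_id, whiskerLeft_hom_inv_assoc,
    Iso.hom_inv_id_assoc]
  rw [← cancel_mono ((β_ X m).inv ▷ Y)]
  simp only [Category.assoc, hom_inv_whiskerRight, Category.comp_id, hom_inv_whiskerRight_assoc]
  rw [← yang_baxter_assoc m Y X]
  simp only [Iso.cancel_iso_inv_left, Category.assoc]
  simp only [Iso.inv_hom_id_assoc]
  rw [← yang_baxter_assoc Y m X]
  simp

private theorem aux_pure3 (m X Y : C) :
    (m ◁ (β_ Y X).inv) ≫ (α_ m Y X).inv ≫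
      (((β_ m Y).hom ≫ (β_ Y m).hom) ▷ X) ≫
      ((β_ (m ⊗ Y) X).hom ≫ (β_ X (m ⊗ Y)).hom) =
    ((β_ m (X ⊗ Y)).hom ≫ (β_ (X ⊗ Y) m).hom) ≫ (m ◁ (β_ X Y).hom) ≫
      (α_ m Y X).inv := by
  rw [aux_sigma_tensor, ← aux_pureDouble m X Y]
  simp

end Aux

/-- For a braided monoidal functor `F : B ⥤ C`, the action
`m * b := m ⊗ F b` and the module braiding `σ_{m,b} := β_{F b, m} ∘ β_{m, F b}` make `C` a
braided right `B`-module category: `σ_{m,𝟙}` is trivial, and the two coherence diagrams of a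
braided module category commute (stated under the identifications
`(m*x)*y ≅ m*(x⊗y)` given by the associator of `C` and the monoidal structure of `F`). -/
theorem braided_functor_gives_braided_module
    {B C : Type*} [Category B] [MonoidalCategory B] [BraidedCategory B]
    [Category C] [MonoidalCategory C] [BraidedCategory C]
    (F : B ⥤ C) [F.Braided] :
    (∀ m : C, moduleBraiding F m (𝟙_ B) = 𝟙 (m ⊗ F.obj (𝟙_ B))) ∧
    (∀ (m : C) (x y : B),
      (α_ m (F.obj x) (F.obj y)).hom ≫
        (m ◁ ((Functor.Monoidal.μIso F x y).hom ≫ F.map (β_ x y).hom ≫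
          (Functor.Monoidal.μIso F y x).inv)) ≫
        (α_ m (F.obj y) (F.obj x)).inv ≫ (moduleBraiding F m y ▷ F.obj x) =
      moduleBraiding F (m ⊗ F.obj x) y ≫
        (α_ m (F.obj x) (F.obj y)).hom ≫
        (m ◁ ((Functor.Monoidal.μIso F x y).hom ≫ F.map (β_ y x).inv ≫
          (Functor.Monoidal.μIso F y x).inv)) ≫
        (α_ m (F.obj y) (F.obj x)).inv) ∧
    (∀ (m : C) (x y : B),
      (m ◁ F.map (β_ y x).inv) ≫ (m ◁ (Functor.Monoidal.μIso F y x).inv) ≫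
        (α_ m (F.obj y) (F.obj x)).inv ≫ (moduleBraiding F m y ▷ F.obj x) ≫
        moduleBraiding F (m ⊗ F.obj y) x =
      moduleBraiding F m (x ⊗ y) ≫ (m ◁ F.map (β_ x y).hom) ≫
        (m ◁ (Functor.Monoidal.μIso F y x).inv) ≫
        (α_ m (F.obj y) (F.obj x)).inv) := by
  have key : ∀ a b : B, F.map (β_ a b).inv =
      Functor.OplaxMonoidal.δ F b a ≫ (β_ (F.obj a) (F.obj b)).inv ≫
        Functor.LaxMonoidal.μ F a b := by
    intro a b
    rw [← cancel_mono (F.map (β_ a b).hom), ← Functor.map_comp]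
    simp
  have hb1 : ∀ a b : B, (Functor.Monoidal.μIso F a b).hom ≫ F.map (β_ a b).hom ≫
      (Functor.Monoidal.μIso F b a).inv = (β_ (F.obj a) (F.obj b)).hom := by
    intro a b; simp
  have hb2 : ∀ a b : B, (Functor.Monoidal.μIso F a b).hom ≫ F.map (β_ b a).inv ≫
      (Functor.Monoidal.μIso F b a).inv = (β_ (F.obj b) (F.obj a)).inv := by
    intro a b; simp [key]
  refine ⟨fun m => aux_unit m _ (Functor.Monoidal.εIso F), fun m x y => ?_, fun m x y => ?_⟩
  · rw [hb1, hb2]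
    simp [moduleBraiding]
  · have hb2' : F.map (β_ y x).inv ≫ (Functor.Monoidal.μIso F y x).inv =
        (Functor.Monoidal.μIso F x y).inv ≫ (β_ (F.obj y) (F.obj x)).inv := by
      simp [key]
    have hb1' : F.map (β_ x y).hom ≫ (Functor.Monoidal.μIso F y x).inv =
        (Functor.Monoidal.μIso F x y).inv ≫ (β_ (F.obj x) (F.obj y)).hom := by
      simp
    calc (m ◁ F.map (β_ y x).inv) ≫ (m ◁ (Functor.Monoidal.μIso F y x).inv) ≫
        (α_ m (F.obj y) (F.obj x)).inv ≫ (moduleBraiding F m y ▷ F.obj x) ≫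
        moduleBraiding F (m ⊗ F.obj y) x
      = (m ◁ (Functor.Monoidal.μIso F x y).inv) ≫ (m ◁ (β_ (F.obj y) (F.obj x)).inv) ≫
        (α_ m (F.obj y) (F.obj x)).inv ≫ (moduleBraiding F m y ▷ F.obj x) ≫
        moduleBraiding F (m ⊗ F.obj y) x := by
          rw [← MonoidalCategory.whiskerLeft_comp_assoc, hb2',
            MonoidalCategory.whiskerLeft_comp_assoc]
      _ = (m ◁ (Functor.Monoidal.μIso F x y).inv) ≫
          (((β_ m (F.obj x ⊗ F.obj y)).hom ≫ (β_ (F.obj x ⊗ F.obj y) m).hom) ≫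
            (m ◁ (β_ (F.obj x) (F.obj y)).hom) ≫
            (α_ m (F.obj y) (F.obj x)).inv) := by
          rw [← aux_pure3 m (F.obj x) (F.obj y)]
          simp [moduleBraiding]
      _ = moduleBraiding F m (x ⊗ y) ≫ (m ◁ F.map (β_ x y).hom) ≫
          (m ◁ (Functor.Monoidal.μIso F y x).inv) ≫
          (α_ m (F.obj y) (F.obj x)).inv := by
          rw [← MonoidalCategory.whiskerLeft_comp_assoc (f := F.map (β_ x y).hom), hb1',
            MonoidalCategory.whiskerLeft_comp_assoc]
          simp only [moduleBraiding, Category.assoc]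
          rw [braiding_naturality_right_assoc, braiding_naturality_left_assoc]
end

section
/- Let C be a braided monoidal category, (A, γ) a half-braided algebra, and define γ^op on the opposite algebra A^op (multiplication μ_A ∘ β⁻¹_{A,A}) by (γ^op)_x := β_{x,A} ∘ γ_x⁻¹ ∘ β⁻¹_{A,x}. Then (A^op, γ^op) is a half-braided algebra: γ^op is natural and monoidal in x and compatible with μ_{A^op} in the sense of equation (hb). -/
open CategoryTheory MonoidalCategory

variable {C : Type*} [Category C] [MonoidalCategory C] [BraidedCategory C]

/-- The data of a half-braided algebra: an object `X` with unit, multiplication, and a family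
of isomorphisms `γ_b : b ⊗ X ≅ X ⊗ b`. -/
structure HBData (C : Type*) [Category C] [MonoidalCategory C] where
  X : C
  one : 𝟙_ C ⟶ X
  mul : X ⊗ X ⟶ X
  γ : ∀ b : C, b ⊗ X ≅ X ⊗ b

/-- The axioms of a half-braided algebra (Definition `HBA` of the paper): `(X, one, mul)` is a
unital associative algebra, and `γ` is natural and monoidal in `b` and compatible with the
multiplication (equation (hb)). -/
structure IsHalfBraidedAlg (D : HBData C) : Prop where
  one_mul : (D.one ▷ D.X) ≫ D.mul = (λ_ D.X).hom
  mul_one : (D.X ◁ D.one) ≫ D.mul = (ρ_ D.X).hom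
  mul_assoc : (D.mul ▷ D.X) ≫ D.mul = (α_ D.X D.X D.X).hom ≫ (D.X ◁ D.mul) ≫ D.mul
  γ_natural : ∀ {b b' : C} (f : b ⟶ b'),
    (f ▷ D.X) ≫ (D.γ b').hom = (D.γ b).hom ≫ (D.X ◁ f)
  γ_unit : (D.γ (𝟙_ C)).hom = (λ_ D.X).hom ≫ (ρ_ D.X).inv
  γ_tensor : ∀ b c : C, (D.γ (b ⊗ c)).hom =
    (α_ b c D.X).hom ≫ (b ◁ (D.γ c).hom) ≫ (α_ b D.X c).inv ≫
      ((D.γ b).hom ▷ c) ≫ (α_ D.X b c).hom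
  γ_mul : ∀ b : C, (b ◁ D.mul) ≫ (D.γ b).hom =
    (α_ b D.X D.X).inv ≫ ((D.γ b).hom ▷ D.X) ≫ (α_ D.X b D.X).hom ≫
      (D.X ◁ (D.γ b).hom) ≫ (α_ D.X D.X b).inv ≫ (D.mul ▷ b)

/-- The right opposite of half-braided algebra data: multiplication `μ ∘ β⁻¹_{A,A}` and
half-braiding `(γ^op)_x = β_{x,A} ∘ γ_x⁻¹ ∘ β⁻¹_{A,x}`. -/
def opHB (D : HBData C) : HBData C where
  X := D.X
  one := D.one
  mul := (β_ D.X D.X).inv ≫ D.mul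
  γ := fun b => (β_ D.X b).symm ≪≫ (D.γ b).symm ≪≫ β_ b D.X

lemma yb_inv (X Y Z : C) :
    (α_ Z Y X).inv ≫ ((β_ Y Z).inv ▷ X) ≫ (α_ Y Z X).hom ≫ (Y ◁ (β_ X Z).inv) ≫
      (α_ Y X Z).inv ≫ ((β_ X Y).inv ▷ Z) ≫ (α_ X Y Z).hom =
    (Z ◁ (β_ X Y).inv) ≫ (α_ Z X Y).inv ≫ ((β_ X Z).inv ▷ Y) ≫
      (α_ X Z Y).hom ≫ (X ◁ (β_ Y Z).inv) := by
  have h := congrArg Iso.inv (BraidedCategory.yang_baxter_iso X Y Z)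
  simpa using h

lemma gi_natural (D : HBData C) (hD : IsHalfBraidedAlg D) {b b' : C} (f : b ⟶ b') :
    (D.X ◁ f) ≫ (D.γ b').inv = (D.γ b).inv ≫ (f ▷ D.X) := by
  rw [← cancel_epi (D.γ b).hom, ← Category.assoc, ← hD.γ_natural f]
  simp

lemma gi_tensor (D : HBData C) (hD : IsHalfBraidedAlg D) (b c : C) :
    (D.γ (b ⊗ c)).inv = (α_ D.X b c).inv ≫ ((D.γ b).inv ▷ c) ≫ (α_ b D.X c).hom ≫
      (b ◁ (D.γ c).inv) ≫ (α_ b c D.X).inv := by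
  rw [← cancel_epi (D.γ (b ⊗ c)).hom, Iso.hom_inv_id, hD.γ_tensor]
  simp

lemma gi_unit (D : HBData C) (hD : IsHalfBraidedAlg D) :
    (D.γ (𝟙_ C)).inv = (ρ_ D.X).hom ≫ (λ_ D.X).inv := by
  rw [← cancel_epi (D.γ (𝟙_ C)).hom, Iso.hom_inv_id, hD.γ_unit]
  simp

lemma E1 (D : HBData C) (hD : IsHalfBraidedAlg D) (b : C) :
    (D.mul ▷ b) ≫ (D.γ b).inv = (α_ D.X D.X b).hom ≫ (D.X ◁ (D.γ b).inv) ≫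
      (α_ D.X b D.X).inv ≫ ((D.γ b).inv ▷ D.X) ≫ (α_ b D.X D.X).hom ≫ (b ◁ D.mul) := by
  rw [Iso.comp_inv_eq]
  simp only [Category.assoc]
  rw [hD.γ_mul]
  simp

lemma s1'' (D : HBData C) (hD : IsHalfBraidedAlg D) (b c : C) :
    (α_ D.X b c).inv ≫ ((D.γ b).inv ▷ c) ≫ (α_ b D.X c).hom ≫ (b ◁ (D.γ c).inv) ≫
      (α_ b c D.X).inv =
    (D.X ◁ (β_ c b).inv) ≫ (α_ D.X c b).inv ≫ ((D.γ c).inv ▷ b) ≫ (α_ c D.X b).hom ≫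
      (c ◁ (D.γ b).inv) ≫ (α_ c b D.X).inv ≫ ((β_ c b).hom ▷ D.X) := by
  have h := gi_natural D hD ((β_ c b).inv)
  rw [gi_tensor D hD c b, gi_tensor D hD b c] at h
  simp only [Category.assoc] at h
  rw [← cancel_mono ((β_ c b).inv ▷ D.X)]
  simp only [Category.assoc]
  rw [reassoc_of% h]
  simp

lemma myb_gen (X b : C) (f : b ⊗ X ⟶ X ⊗ b) :
    (b ◁ (β_ X X).inv) ≫ (α_ b X X).inv ≫ (f ▷ X) ≫ (α_ X b X).hom ≫ (X ◁ (β_ b X).hom) =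
    (α_ b X X).inv ≫ ((β_ b X).hom ▷ X) ≫ (α_ X b X).hom ≫ (X ◁ f) ≫ (α_ X X b).inv ≫
      ((β_ X X).inv ▷ b) ≫ (α_ X X b).hom := by
  have h := BraidedCategory.braiding_naturality_left f X
  rw [BraidedCategory.braiding_tensor_left_hom, BraidedCategory.braiding_tensor_left_hom] at h
  simp only [Category.assoc] at h
  rw [← cancel_mono ((α_ X X b).inv ≫ ((β_ X X).hom ▷ b) ≫ (α_ X X b).hom)]
  simp only [Category.assoc]
  rw [h]
  simp

lemma myb2_gen (X b : C) (f : X ⊗ b ⟶ b ⊗ X) :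
    (β_ (X ⊗ X) b).inv ≫ ((β_ X X).inv ▷ b) ≫ (α_ X X b).hom ≫ (X ◁ f) =
    (α_ b X X).inv ≫ ((β_ X b).inv ▷ X) ≫ (f ▷ X) ≫ (α_ b X X).hom ≫
      (b ◁ (β_ X X).inv) ≫ (α_ b X X).inv ≫ ((β_ X b).inv ▷ X) ≫ (α_ X b X).hom := by
  have h := BraidedCategory.braiding_inv_naturality_left f X
  rw [BraidedCategory.braiding_tensor_right_inv, BraidedCategory.braiding_tensor_right_inv] at h
  simp only [Category.assoc] at h
  rw [BraidedCategory.braiding_tensor_left_inv]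
  simp only [Category.assoc]
  rw [← h]

lemma exc (D : HBData C) (hD : IsHalfBraidedAlg D) (b c : C) :
    (((β_ D.X b).inv ≫ (D.γ b).inv) ▷ c) ≫ (α_ b D.X c).hom ≫
      (b ◁ ((D.γ c).inv ≫ (β_ c D.X).hom)) ≫ (α_ b D.X c).inv =
    (α_ b D.X c).hom ≫ (b ◁ ((D.γ c).inv ≫ (β_ c D.X).hom)) ≫ (α_ b D.X c).inv ≫
      (((β_ D.X b).inv ≫ (D.γ b).inv) ▷ c) := by
  calc
    _ = 𝟙 _ ⊗≫ ((β_ D.X b).inv ▷ c) ⊗≫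
        ((α_ D.X b c).inv ≫ ((D.γ b).inv ▷ c) ≫ (α_ b D.X c).hom ≫ (b ◁ (D.γ c).inv) ≫
          (α_ b c D.X).inv) ⊗≫ (b ◁ (β_ c D.X).hom) ⊗≫ 𝟙 _ := by monoidal
    _ = 𝟙 _ ⊗≫ ((β_ D.X b).inv ▷ c) ⊗≫
        ((D.X ◁ (β_ c b).inv) ≫ (α_ D.X c b).inv ≫ ((D.γ c).inv ▷ b) ≫ (α_ c D.X b).hom ≫
          (c ◁ (D.γ b).inv) ≫ (α_ c b D.X).inv ≫ ((β_ c b).hom ▷ D.X)) ⊗≫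
        (b ◁ (β_ c D.X).hom) ⊗≫ 𝟙 _ := by rw [s1'' D hD b c]
    _ = 𝟙 _ ⊗≫ (((β_ (D.X ⊗ c : C) b).inv) ≫ ((D.γ c).inv ▷ b)) ⊗≫
        ((c ◁ (D.γ b).inv) ≫ (α_ c b D.X).inv ≫ ((β_ c b).hom ▷ D.X)) ⊗≫
        (b ◁ (β_ c D.X).hom) ⊗≫ 𝟙 _ := by
          rw [BraidedCategory.braiding_tensor_left_inv D.X c b]; monoidal
    _ = 𝟙 _ ⊗≫ ((b ◁ (D.γ c).inv) ≫ (β_ (c ⊗ D.X : C) b).inv) ⊗≫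
        ((c ◁ (D.γ b).inv) ≫ (α_ c b D.X).inv ≫ ((β_ c b).hom ▷ D.X)) ⊗≫
        (b ◁ (β_ c D.X).hom) ⊗≫ 𝟙 _ := by
          rw [← BraidedCategory.braiding_inv_naturality_right b (D.γ c).inv]
    _ = 𝟙 _ ⊗≫ (b ◁ (D.γ c).inv) ⊗≫ ((β_ c b).inv ▷ D.X) ⊗≫
        ((c ◁ ((β_ D.X b).inv ≫ (D.γ b).inv)) ≫ (α_ c b D.X).inv ≫ ((β_ c b).hom ▷ D.X)) ⊗≫
        (b ◁ (β_ c D.X).hom) ⊗≫ 𝟙 _ := by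
          rw [BraidedCategory.braiding_tensor_left_inv c D.X b]; monoidal
    _ = 𝟙 _ ⊗≫ (b ◁ (D.γ c).inv) ⊗≫ ((β_ c b).inv ▷ D.X) ⊗≫
        ((c ◁ ((β_ D.X b).inv ≫ (D.γ b).inv)) ≫ (β_ c (b ⊗ D.X : C)).hom) ⊗≫ 𝟙 _ := by
          rw [BraidedCategory.braiding_tensor_right_hom c b D.X]; monoidal
    _ = 𝟙 _ ⊗≫ (b ◁ (D.γ c).inv) ⊗≫ ((β_ c b).inv ▷ D.X) ⊗≫
        ((β_ c (b ⊗ D.X : C)).hom ≫ (((β_ D.X b).inv ≫ (D.γ b).inv) ▷ c)) ⊗≫ 𝟙 _ := by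
          rw [BraidedCategory.braiding_naturality_right c ((β_ D.X b).inv ≫ (D.γ b).inv)]
    _ = 𝟙 _ ⊗≫ (b ◁ (D.γ c).inv) ⊗≫ (((β_ c b).inv ≫ (β_ c b).hom) ▷ D.X) ⊗≫
        (b ◁ (β_ c D.X).hom) ⊗≫ (((β_ D.X b).inv ≫ (D.γ b).inv) ▷ c) ⊗≫ 𝟙 _ := by
          rw [BraidedCategory.braiding_tensor_right_hom c b D.X]; monoidal
    _ = _ := by rw [Iso.inv_hom_id]; monoidal

/-- For a half-braided algebra `(A, γ)`, the right opposite
`(A^op, γ^op)` with `μ_{A^op} = μ_A ∘ β⁻¹_{A,A}` and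
`(γ^op)_x = β_{x,A} ∘ γ_x⁻¹ ∘ β⁻¹_{A,x}` is again a half-braided algebra. -/
theorem opHB_isHalfBraidedAlg (D : HBData C) (hD : IsHalfBraidedAlg D) :
    IsHalfBraidedAlg (opHB D) := by
  constructor
  case one_mul =>
    show (D.one ▷ D.X) ≫ (β_ D.X D.X).inv ≫ D.mul = _
    rw [BraidedCategory.braiding_inv_naturality_left_assoc]
    simp [braiding_inv_tensorUnit_right, hD.mul_one, opHB]
  case mul_one =>
    show (D.X ◁ D.one) ≫ (β_ D.X D.X).inv ≫ D.mul = _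
    rw [BraidedCategory.braiding_inv_naturality_right_assoc]
    simp [braiding_inv_tensorUnit_left, hD.one_mul, opHB]
  case mul_assoc =>
    show ((β_ D.X D.X).inv ≫ D.mul) ▷ D.X ≫ (β_ D.X D.X).inv ≫ D.mul = _
    rw [comp_whiskerRight, Category.assoc,
      BraidedCategory.braiding_inv_naturality_left_assoc]
    show _ = (α_ _ _ _).hom ≫ (D.X ◁ ((β_ D.X D.X).inv ≫ D.mul)) ≫ (β_ D.X D.X).inv ≫ D.mul
    rw [MonoidalCategory.whiskerLeft_comp, Category.assoc,
      BraidedCategory.braiding_inv_naturality_right_assoc, hD.mul_assoc]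
    simp only [BraidedCategory.braiding_tensor_left_inv,
      BraidedCategory.braiding_tensor_right_inv, Category.assoc, Iso.inv_hom_id_assoc,
      Iso.hom_inv_id_assoc]
    rw [← cancel_epi (α_ D.X D.X D.X).inv]
    rw [reassoc_of% (yb_inv D.X D.X D.X)]
    simp
  case γ_natural =>
    intro b b' f
    show (f ▷ D.X) ≫ (β_ D.X b').inv ≫ (D.γ b').inv ≫ (β_ b' D.X).hom =
      ((β_ D.X b).inv ≫ (D.γ b).inv ≫ (β_ b D.X).hom) ≫ (D.X ◁ f)
    rw [BraidedCategory.braiding_inv_naturality_left_assoc,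
      reassoc_of% (gi_natural D hD f), BraidedCategory.braiding_naturality_left]
    simp
  case γ_unit =>
    show (β_ D.X (𝟙_ C)).inv ≫ (D.γ (𝟙_ C)).inv ≫ (β_ (𝟙_ C) D.X).hom = _
    rw [gi_unit D hD, braiding_inv_tensorUnit_right, braiding_tensorUnit_left]
    simp [opHB]
  case γ_tensor =>
    intro b c
    show (β_ D.X (b ⊗ c)).inv ≫ (D.γ (b ⊗ c)).inv ≫ (β_ (b ⊗ c) D.X).hom =
      (α_ b c D.X).hom ≫
        (b ◁ ((β_ D.X c).inv ≫ (D.γ c).inv ≫ (β_ c D.X).hom)) ≫ (α_ b D.X c).inv ≫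
        (((β_ D.X b).inv ≫ (D.γ b).inv ≫ (β_ b D.X).hom) ▷ c) ≫ (α_ D.X b c).hom
    rw [gi_tensor D hD b c]
    calc
      _ = 𝟙 _ ⊗≫ (b ◁ (β_ D.X c).inv) ⊗≫
          ((((β_ D.X b).inv ≫ (D.γ b).inv) ▷ c) ≫ (α_ b D.X c).hom ≫
            (b ◁ ((D.γ c).inv ≫ (β_ c D.X).hom)) ≫ (α_ b D.X c).inv) ⊗≫
          ((β_ b D.X).hom ▷ c) ⊗≫ 𝟙 _ := by
            rw [BraidedCategory.braiding_tensor_right_inv D.X b c,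
              BraidedCategory.braiding_tensor_left_hom b c D.X]
            monoidal
      _ = 𝟙 _ ⊗≫ (b ◁ (β_ D.X c).inv) ⊗≫
          ((α_ b D.X c).hom ≫ (b ◁ ((D.γ c).inv ≫ (β_ c D.X).hom)) ≫ (α_ b D.X c).inv ≫
            (((β_ D.X b).inv ≫ (D.γ b).inv) ▷ c)) ⊗≫
          ((β_ b D.X).hom ▷ c) ⊗≫ 𝟙 _ := by rw [exc D hD b c]
      _ = _ := by monoidal
  case γ_mul =>
    intro b
    show (b ◁ ((β_ D.X D.X).inv ≫ D.mul)) ≫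
        ((β_ D.X b).inv ≫ (D.γ b).inv ≫ (β_ b D.X).hom) =
      (α_ b D.X D.X).inv ≫
        (((β_ D.X b).inv ≫ (D.γ b).inv ≫ (β_ b D.X).hom) ▷ D.X) ≫ (α_ D.X b D.X).hom ≫
        (D.X ◁ ((β_ D.X b).inv ≫ (D.γ b).inv ≫ (β_ b D.X).hom)) ≫ (α_ D.X D.X b).inv ≫
        (((β_ D.X D.X).inv ≫ D.mul) ▷ b)
    calc
      _ = 𝟙 _ ⊗≫ (b ◁ (β_ D.X D.X).inv) ⊗≫
          ((b ◁ D.mul) ≫ (β_ D.X b).inv) ⊗≫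
          ((D.γ b).inv ≫ (β_ b D.X).hom) ⊗≫ 𝟙 _ := by monoidal
      _ = 𝟙 _ ⊗≫ (b ◁ (β_ D.X D.X).inv) ⊗≫
          ((β_ (D.X ⊗ D.X : C) b).inv ≫ (D.mul ▷ b)) ⊗≫
          ((D.γ b).inv ≫ (β_ b D.X).hom) ⊗≫ 𝟙 _ := by
            rw [BraidedCategory.braiding_inv_naturality_right b D.mul]
      _ = 𝟙 _ ⊗≫ (b ◁ (β_ D.X D.X).inv) ⊗≫ (β_ (D.X ⊗ D.X : C) b).inv ⊗≫
          ((D.mul ▷ b) ≫ (D.γ b).inv) ⊗≫ (β_ b D.X).hom ⊗≫ 𝟙 _ := by monoidal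
      _ = 𝟙 _ ⊗≫ (b ◁ (β_ D.X D.X).inv) ⊗≫ (β_ (D.X ⊗ D.X : C) b).inv ⊗≫
          ((α_ D.X D.X b).hom ≫ (D.X ◁ (D.γ b).inv) ≫ (α_ D.X b D.X).inv ≫
            ((D.γ b).inv ▷ D.X) ≫ (α_ b D.X D.X).hom ≫ (b ◁ D.mul)) ⊗≫
          (β_ b D.X).hom ⊗≫ 𝟙 _ := by rw [E1 D hD b]
      _ = 𝟙 _ ⊗≫ (b ◁ (β_ D.X D.X).inv) ⊗≫ (β_ (D.X ⊗ D.X : C) b).inv ⊗≫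
          (D.X ◁ (D.γ b).inv) ⊗≫ ((D.γ b).inv ▷ D.X) ⊗≫
          ((b ◁ D.mul) ≫ (β_ b D.X).hom) ⊗≫ 𝟙 _ := by monoidal
      _ = 𝟙 _ ⊗≫ ((b ◁ (β_ D.X D.X).inv) ≫ (β_ (D.X ⊗ D.X : C) b).inv) ⊗≫
          (D.X ◁ (D.γ b).inv) ⊗≫ ((D.γ b).inv ▷ D.X) ⊗≫
          ((β_ b (D.X ⊗ D.X : C)).hom ≫ (D.mul ▷ b)) ⊗≫ 𝟙 _ := by
            rw [BraidedCategory.braiding_naturality_right b D.mul]; monoidal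
      _ = 𝟙 _ ⊗≫ ((β_ (D.X ⊗ D.X : C) b).inv ≫ ((β_ D.X D.X).inv ▷ b)) ⊗≫
          (D.X ◁ (D.γ b).inv) ⊗≫ ((D.γ b).inv ▷ D.X) ⊗≫
          ((β_ b (D.X ⊗ D.X : C)).hom ≫ (D.mul ▷ b)) ⊗≫ 𝟙 _ := by
            rw [BraidedCategory.braiding_inv_naturality_right b (β_ D.X D.X).inv]
      _ = 𝟙 _ ⊗≫ ((β_ (D.X ⊗ D.X : C) b).inv ≫ ((β_ D.X D.X).inv ▷ b) ≫
            (α_ D.X D.X b).hom ≫ (D.X ◁ (D.γ b).inv)) ⊗≫ ((D.γ b).inv ▷ D.X) ⊗≫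
          ((β_ b (D.X ⊗ D.X : C)).hom ≫ (D.mul ▷ b)) ⊗≫ 𝟙 _ := by monoidal
      _ = 𝟙 _ ⊗≫ ((α_ b D.X D.X).inv ≫ ((β_ D.X b).inv ▷ D.X) ≫ ((D.γ b).inv ▷ D.X) ≫
            (α_ b D.X D.X).hom ≫ (b ◁ (β_ D.X D.X).inv) ≫ (α_ b D.X D.X).inv ≫
            ((β_ D.X b).inv ▷ D.X) ≫ (α_ D.X b D.X).hom) ⊗≫ ((D.γ b).inv ▷ D.X) ⊗≫
          ((β_ b (D.X ⊗ D.X : C)).hom ≫ (D.mul ▷ b)) ⊗≫ 𝟙 _ := by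
            rw [myb2_gen D.X b (D.γ b).inv]
      _ = 𝟙 _ ⊗≫ ((β_ D.X b).inv ▷ D.X) ⊗≫ ((D.γ b).inv ▷ D.X) ⊗≫
          ((b ◁ (β_ D.X D.X).inv) ≫ (α_ b D.X D.X).inv ≫
            (((β_ D.X b).inv ≫ (D.γ b).inv ≫ (β_ b D.X).hom) ▷ D.X) ≫
            (α_ D.X b D.X).hom ≫ (D.X ◁ (β_ b D.X).hom)) ⊗≫
          (D.mul ▷ b) ⊗≫ 𝟙 _ := by
            rw [BraidedCategory.braiding_tensor_right_hom b D.X D.X]; monoidal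
      _ = 𝟙 _ ⊗≫ ((β_ D.X b).inv ▷ D.X) ⊗≫ ((D.γ b).inv ▷ D.X) ⊗≫
          ((α_ b D.X D.X).inv ≫ ((β_ b D.X).hom ▷ D.X) ≫ (α_ D.X b D.X).hom ≫
            (D.X ◁ ((β_ D.X b).inv ≫ (D.γ b).inv ≫ (β_ b D.X).hom)) ≫ (α_ D.X D.X b).inv ≫
            ((β_ D.X D.X).inv ▷ b) ≫ (α_ D.X D.X b).hom) ⊗≫
          (D.mul ▷ b) ⊗≫ 𝟙 _ := by
            rw [myb_gen D.X b ((β_ D.X b).inv ≫ (D.γ b).inv ≫ (β_ b D.X).hom)]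
      _ = _ := by monoidal
end
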